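/- Let λ₀ ∈ ℂ with Im λ₀ > 0 and λ₀ ≠ i. Then the c-entropy S_a := -Real.log|(λ₀+i)/(conj(λ₀)+i)| - Real.log|(conj(λ₀)-i)/(λ₀-i)| equals Real.log((|λ₀|² - 2·Im λ₀ + 1)/(|λ₀|² + 2·Im λ₀ + 1)), and this value is negative. -/

import Mathlib

open Complex

theorem stmt_7 (l : ℂ) (hl : 0 < l.im) (hne : l ≠ Complex.I) :
    (-Real.log (‖(l + Complex.I) / ((starRingEnd ℂ) l + Complex.I)‖)
      - Real.log (‖((starRingEnd ℂ) l - Complex.I) / (l - Complex.I)‖) =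
      Real.log ((‖l‖ ^ 2 - 2 * l.im + 1) / (‖l‖ ^ 2 + 2 * l.im + 1))) ∧
    Real.log ((‖l‖ ^ 2 - 2 * l.im + 1) / (‖l‖ ^ 2 + 2 * l.im + 1)) < 0 := by
  set A : ℝ := l.re ^ 2 + (l.im - 1) ^ 2 with hAdef
  set B : ℝ := l.re ^ 2 + (l.im + 1) ^ 2 with hBdef
  have hA : ‖l‖ ^ 2 - 2 * l.im + 1 = A := by
    rw [Complex.sq_norm, Complex.normSq_apply, hAdef]; ring
  have hB : ‖l‖ ^ 2 + 2 * l.im + 1 = B := by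
    rw [Complex.sq_norm, Complex.normSq_apply, hBdef]; ring
  have hApos : 0 < A := by
    rcases eq_or_ne l.re 0 with h | h
    · have him : l.im ≠ 1 := by
        intro h1
        exact hne (Complex.ext (by simp [h]) (by simp [h1]))
      have : l.im - 1 ≠ 0 := sub_ne_zero.mpr him
      positivity
    · positivity
  have hBpos : 0 < B := by
    have : 0 < l.im + 1 := by linarith
    positivity
  have h1 : ‖l + Complex.I‖ = Real.sqrt B := by
    rw [Complex.norm_def, Complex.normSq_apply]
    congr 1
    simp [hBdef]; ring
  have h2 : ‖(starRingEnd ℂ) l + Complex.I‖ = Real.sqrt A := by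
    rw [Complex.norm_def, Complex.normSq_apply]
    congr 1
    simp [hAdef]; ring
  have h3 : ‖(starRingEnd ℂ) l - Complex.I‖ = Real.sqrt B := by
    rw [Complex.norm_def, Complex.normSq_apply]
    congr 1
    simp [hBdef]; ring
  have h4 : ‖l - Complex.I‖ = Real.sqrt A := by
    rw [Complex.norm_def, Complex.normSq_apply]
    congr 1
    simp [hAdef]; ring
  constructor
  · rw [hA, hB, norm_div, norm_div, h1, h2, h3, h4,
      Real.log_div (Real.sqrt_ne_zero'.mpr hBpos) (Real.sqrt_ne_zero'.mpr hApos),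
      Real.log_sqrt hApos.le, Real.log_sqrt hBpos.le,
      Real.log_div hApos.ne' hBpos.ne']
    ring
  · rw [hA, hB]
    apply Real.log_neg
    · positivity
    · rw [div_lt_one hBpos]
      nlinarith [hl]
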